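/- Let s_k = sin(kπ/9) for k = 1,2,3,4 and let A' be the 3×3 matrix with rows (0,1,1), (1,1,1), (0,1,2). Then the row vector v = ( (s₁/s₄)·(s₂/s₄ + s₁/s₂), s₂/s₄ + s₁/s₂, 1 + s₄s₁/s₂² ) satisfies v·A' = (s₄/s₁)·v; that is, v is a left eigenvector of A' with eigenvalue λ = s₄/s₁. -/

import Mathlib

open Real

/-- With `s_k = sin(kπ/9)` and `A'` the 3×3 matrix with rows `(0,1,1), (1,1,1),
(0,1,2)`, the row vector
`v = ((s₁/s₄)(s₂/s₄ + s₁/s₂), s₂/s₄ + s₁/s₂, 1 + s₄s₁/s₂²)` (the areas of the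
polygonal prototiles) satisfies `v·A' = (s₄/s₁)·v`, i.e. `v` is a left
eigenvector of `A'` with eigenvalue `λ = s₄/s₁`. -/
theorem dual_matrix_left_eigenvector (s : ℕ → ℝ)
    (hs : ∀ k, s k = Real.sin ((k : ℝ) * π / 9)) :
    Matrix.vecMul
        ![(s 1 / s 4) * (s 2 / s 4 + s 1 / s 2), s 2 / s 4 + s 1 / s 2,
          1 + s 4 * s 1 / (s 2) ^ 2]
        !![(0 : ℝ), 1, 1; 1, 1, 1; 0, 1, 2] =
      (s 4 / s 1) •
        ![(s 1 / s 4) * (s 2 / s 4 + s 1 / s 2), s 2 / s 4 + s 1 / s 2,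
          1 + s 4 * s 1 / (s 2) ^ 2] := by
  set a := Real.sin (π / 9) with ha
  set x := Real.cos (π / 9) with hx
  have hpi : (0:ℝ) < π := Real.pi_pos
  have ha0 : 0 < a := Real.sin_pos_of_pos_of_lt_pi (by positivity) (by nlinarith)
  have hx0 : 0 < x := Real.cos_pos_of_mem_Ioo ⟨by nlinarith, by nlinarith⟩
  have hc2 : Real.cos (2 * (π / 9)) = 2 * x ^ 2 - 1 := by
    rw [Real.cos_two_mul]
  have hc20 : 0 < 2 * x ^ 2 - 1 := by
    rw [← hc2]
    exact Real.cos_pos_of_mem_Ioo ⟨by nlinarith, by nlinarith⟩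
  have hpyth : a ^ 2 + x ^ 2 = 1 := by
    rw [ha, hx]; exact Real.sin_sq_add_cos_sq _
  have hcube : 8 * x ^ 3 = 6 * x + 1 := by
    have h3 : Real.cos (3 * (π / 9)) = 1 / 2 := by
      norm_num [show 3 * (π / 9) = π / 3 by ring, Real.cos_pi_div_three]
    rw [Real.cos_three_mul] at h3
    nlinarith [h3]
  have hs1 : s 1 = a := by rw [hs]; norm_num [ha]
  have hs2 : s 2 = 2 * a * x := by
    rw [hs, show ((2:ℕ):ℝ) * π / 9 = 2 * (π/9) by push_cast; ring, Real.sin_two_mul]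
  have hs4 : s 4 = 2 * (2 * a * x) * (2 * x ^ 2 - 1) := by
    rw [hs, show ((4:ℕ):ℝ) * π / 9 = 2 * (2 * (π/9)) by push_cast; ring,
      Real.sin_two_mul, Real.sin_two_mul, hc2]
  have ha' : a ≠ 0 := ne_of_gt ha0
  have hx' : x ≠ 0 := ne_of_gt hx0
  have hc' : 2 * x ^ 2 - 1 ≠ 0 := ne_of_gt hc20
  funext i
  fin_cases i
  · simp [Matrix.vecMul, dotProduct, Fin.sum_univ_three, hs1, hs2, hs4]
    field_simp
  · simp [Matrix.vecMul, dotProduct, Fin.sum_univ_three, hs1, hs2, hs4]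
    field_simp
    linear_combination
      (-1 + 2 * x + 4 * x ^ 2 - 8 * x ^ 3) * hcube
  · simp [Matrix.vecMul, dotProduct, Fin.sum_univ_three, hs1, hs2, hs4]
    field_simp
    linear_combination
      (-1 - 6 * x + 4 * x ^ 2 + 24 * x ^ 3 - 32 * x ^ 5) * hcube
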